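/- There exists a constant C > 0 such that for every g ∈ L²((0,1),ℂ) one has |μ₁(g)|² ≤ C·‖g‖_{L²(0,1)}·(‖Pg‖²_{L²(0,1)} + |μ₀(g)|²)^{1/2}; i.e., the first-moment functional satisfies an interpolation-type estimate between the L² norm and the H⁻¹(T)-type norm. -/

import Mathlib

open MeasureTheory intervalIntegral

/-- `𝓘g(x) = ∫₀ˣ g(y) dy` -/
noncomputable def Iprim (g : ℝ → ℂ) (x : ℝ) : ℂ := ∫ y in (0:ℝ)..x, g y

/-- `Pg(x) = 𝓘g(x) − ∫₀¹ 𝓘g(z) dz` -/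
noncomputable def Pfun (g : ℝ → ℂ) (x : ℝ) : ℂ := Iprim g x - ∫ z in (0:ℝ)..1, Iprim g z

/-- `μ₀(g) = ∫₀¹ g(x) dx` -/
noncomputable def mu0 (g : ℝ → ℂ) : ℂ := ∫ x in (0:ℝ)..1, g x

/-- `μ₁(g) = ∫₀¹ (1−x) g(x) dx` -/
noncomputable def mu1 (g : ℝ → ℂ) : ℂ := ∫ x in (0:ℝ)..1, ((1 - x : ℝ) : ℂ) * g x

/-- Interpolation-type estimate: there is `C > 0` such that for every `g ∈ L²((0,1),ℂ)`,
`|μ₁(g)|² ≤ C ‖g‖_{L²} (‖Pg‖²_{L²} + |μ₀(g)|²)^{1/2}`. -/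


lemma amgm_sqrt {X a L : ℝ} (ha : 0 ≤ a) (hL : 0 ≤ L)
    (h : ∀ t : ℝ, 0 < t → X ≤ a / (2 * t) + L * t / 2) :
    X ≤ Real.sqrt (a * L) := by
  have hX0 : X ≤ 0 → X ≤ Real.sqrt (a * L) :=
    fun h' => h'.trans (Real.sqrt_nonneg _)
  rcases eq_or_lt_of_le ha with ha0 | ha0
  · -- a = 0
    apply hX0
    by_contra hX
    push_neg at hX
    rcases eq_or_lt_of_le hL with hL0 | hL0
    · have := h 1 one_pos
      rw [← ha0, ← hL0] at this
      norm_num at this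
      exact absurd this (not_le.2 hX)
    · have := h (X / L) (div_pos hX hL0)
      rw [← ha0] at this
      have hLX : L * (X / L) = X := by field_simp
      rw [hLX] at this
      norm_num at this
      linarith
  · rcases eq_or_lt_of_le hL with hL0 | hL0
    · -- L = 0
      apply hX0
      by_contra hX
      push_neg at hX
      have := h (a / X) (div_pos ha0 hX)
      rw [← hL0] at this
      have : X ≤ X / 2 := by
        have h2 : a / (2 * (a / X)) = X / 2 := by field_simp
        rw [h2] at this; linarith
      linarith
    · -- a > 0, L > 0
      have hsa : (0:ℝ) < Real.sqrt a := Real.sqrt_pos.2 ha0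
      have hsL : (0:ℝ) < Real.sqrt L := Real.sqrt_pos.2 hL0
      have := h (Real.sqrt a / Real.sqrt L) (div_pos hsa hsL)
      have e1 : a / (2 * (Real.sqrt a / Real.sqrt L)) = Real.sqrt a * Real.sqrt L / 2 := by
        rw [div_eq_iff (by positivity)]
        have : Real.sqrt a * Real.sqrt a = a := Real.mul_self_sqrt ha
        field_simp
        nlinarith
      have e2 : L * (Real.sqrt a / Real.sqrt L) / 2 = Real.sqrt a * Real.sqrt L / 2 := by
        rw [div_eq_div_iff (by norm_num) (by norm_num)]
        have : Real.sqrt L * Real.sqrt L = L := Real.mul_self_sqrt hL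
        field_simp
        nlinarith
      rw [e1, e2] at this
      rw [Real.sqrt_mul ha]
      linarith

lemma cs_general (f : ℝ → ℝ)
    (hii : ∀ u v : ℝ, u ∈ Set.Icc (0:ℝ) 1 → v ∈ Set.Icc (0:ℝ) 1 →
      IntervalIntegrable f volume u v)
    (hii2 : ∀ u v : ℝ, u ∈ Set.Icc (0:ℝ) 1 → v ∈ Set.Icc (0:ℝ) 1 →
      IntervalIntegrable (fun y => f y ^ 2) volume u v)
    {s : ℝ} (hs : s ∈ Set.Icc (0:ℝ) 1) :
    (∫ y in s..1, f y) ≤ Real.sqrt ((∫ y in (0:ℝ)..1, f y ^ 2) * (1 - s)) := by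
  obtain ⟨hs0, hs1⟩ := hs
  have h0 : (0:ℝ) ∈ Set.Icc (0:ℝ) 1 := by norm_num
  have h1 : (1:ℝ) ∈ Set.Icc (0:ℝ) 1 := by norm_num
  have hsm : s ∈ Set.Icc (0:ℝ) 1 := ⟨hs0, hs1⟩
  have h2nn : 0 ≤ ∫ y in (0:ℝ)..1, f y ^ 2 :=
    intervalIntegral.integral_nonneg zero_le_one (fun y _ => sq_nonneg _)
  have hsplit : (∫ y in (0:ℝ)..s, f y ^ 2) + (∫ y in s..1, f y ^ 2)
      = ∫ y in (0:ℝ)..1, f y ^ 2 :=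
    intervalIntegral.integral_add_adjacent_intervals (hii2 0 s h0 hsm) (hii2 s 1 hsm h1)
  have hfirst : 0 ≤ ∫ y in (0:ℝ)..s, f y ^ 2 :=
    intervalIntegral.integral_nonneg hs0 (fun y _ => sq_nonneg _)
  have hle : (∫ y in s..1, f y ^ 2) ≤ ∫ y in (0:ℝ)..1, f y ^ 2 := by linarith
  apply amgm_sqrt h2nn (by linarith)
  intro t ht
  have hmono : (∫ y in s..1, f y) ≤ ∫ y in s..1, (f y ^ 2 / (2 * t) + t / 2) := by
    refine intervalIntegral.integral_mono_on hs1 (hii s 1 hsm h1)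
      (((hii2 s 1 hsm h1).div_const (2 * t)).add intervalIntegrable_const) ?_
    intro y _
    have h2t : (0:ℝ) < 2 * t := by linarith
    have ht2 : t / 2 = t ^ 2 / (2 * t) := by field_simp
    rw [ht2, ← add_div, le_div_iff₀ h2t]
    nlinarith [sq_nonneg (f y - t)]
  have hcalc : (∫ y in s..1, (f y ^ 2 / (2 * t) + t / 2))
      = (∫ y in s..1, f y ^ 2) / (2 * t) + (1 - s) * (t / 2) := by
    rw [intervalIntegral.integral_add ((hii2 s 1 hsm h1).div_const (2 * t))
      intervalIntegrable_const, intervalIntegral.integral_div,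
      intervalIntegral.integral_const, smul_eq_mul]
  rw [hcalc] at hmono
  have : (∫ y in s..1, f y ^ 2) / (2 * t) ≤ (∫ y in (0:ℝ)..1, f y ^ 2) / (2 * t) := by
    gcongr
  nlinarith

lemma mu1_eq_integral_Iprim (g : ℝ → ℂ)
    (hgi : IntegrableOn g (Set.Ioo (0:ℝ) 1) volume) :
    mu1 g = ∫ z in (0:ℝ)..1, Iprim g z := by
  have hres : volume.restrict (Set.Ioc (0:ℝ) 1) = volume.restrict (Set.Ioo (0:ℝ) 1) :=
    Measure.restrict_congr_set Ioo_ae_eq_Ioc.symm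
  set ν := volume.restrict (Set.Ioc (0:ℝ) 1) with hν
  have hgν : Integrable g ν := by rw [hres]; exact hgi
  set T : Set (ℝ × ℝ) := {p : ℝ × ℝ | p.2 ≤ p.1} with hT
  have hTm : MeasurableSet T := measurableSet_le measurable_snd measurable_fst
  set F : ℝ × ℝ → ℂ := T.indicator (fun p => g p.2) with hF
  have hF_x : ∀ (x y : ℝ), F (x, y) = (Set.Iic x).indicator g y := by
    intro x y
    simp only [hF, hT, Set.indicator_apply, Set.mem_setOf_eq, Set.mem_Iic]
  have hF_y : ∀ (y x : ℝ), F (x, y) = (Set.Ici y).indicator (fun _ => g y) x := by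
    intro y x
    simp only [hF, hT, Set.indicator_apply, Set.mem_setOf_eq, Set.mem_Ici]
  have hFm : AEStronglyMeasurable F (ν.prod ν) :=
    (hgν.aestronglyMeasurable.comp_snd).indicator hTm
  have hFint : Integrable F (ν.prod ν) := by
    rw [integrable_prod_iff hFm]
    constructor
    · refine Filter.Eventually.of_forall (fun x => ?_)
      simp only [hF_x]
      exact hgν.indicator measurableSet_Iic
    · refine Integrable.mono' (integrable_const (∫ y, ‖g y‖ ∂ν))
        hFm.norm.integral_prod_right' (Filter.Eventually.of_forall (fun x => ?_))
      have hnn : 0 ≤ ∫ y, ‖F (x, y)‖ ∂ν := integral_nonneg (fun y => norm_nonneg _)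
      rw [Real.norm_of_nonneg hnn]
      refine integral_mono ?_ hgν.norm (fun y => ?_)
      · simp only [hF_x]
        exact (hgν.indicator measurableSet_Iic).norm
      · rw [hF_x x y]
        exact norm_indicator_le_norm_self g y
  have hswap : (∫ x, ∫ y, F (x, y) ∂ν ∂ν) = ∫ y, ∫ x, F (x, y) ∂ν ∂ν :=
    integral_integral_swap hFint
  have claim1 : ∀ x ∈ Set.Ioc (0:ℝ) 1, (∫ y, F (x, y) ∂ν) = Iprim g x := by
    intro x hx
    simp only [hF_x]
    rw [MeasureTheory.integral_indicator measurableSet_Iic, hν, Measure.restrict_restrict measurableSet_Iic]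
    have hset : Set.Iic x ∩ Set.Ioc (0:ℝ) 1 = Set.Ioc 0 x := by
      ext y
      simp only [Set.mem_inter_iff, Set.mem_Iic, Set.mem_Ioc]
      constructor
      · rintro ⟨h1, h2, h3⟩; exact ⟨h2, h1⟩
      · rintro ⟨h1, h2⟩; exact ⟨h2, h1, h2.trans hx.2⟩
    rw [hset, Iprim, intervalIntegral.integral_of_le hx.1.le]
  have claim2 : ∀ y ∈ Set.Ioc (0:ℝ) 1, (∫ x, F (x, y) ∂ν) = ((1 - y : ℝ) : ℂ) * g y := by
    intro y hy
    simp only [hF_y y]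
    rw [MeasureTheory.integral_indicator measurableSet_Ici, hν,
      Measure.restrict_restrict measurableSet_Ici]
    have hset : Set.Ici y ∩ Set.Ioc (0:ℝ) 1 = Set.Icc y 1 := by
      ext x
      simp only [Set.mem_inter_iff, Set.mem_Ici, Set.mem_Ioc, Set.mem_Icc]
      constructor
      · rintro ⟨h1, h2, h3⟩; exact ⟨h1, h3⟩
      · rintro ⟨h1, h2⟩; exact ⟨h1, hy.1.trans_le h1, h2⟩
    rw [hset, setIntegral_const, Real.volume_real_Icc_of_le (by linarith [hy.2])]
    rw [Complex.real_smul]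
  have lhs_eq : mu1 g = ∫ y, ((1 - y : ℝ) : ℂ) * g y ∂ν := by
    rw [mu1, intervalIntegral.integral_of_le zero_le_one]
  have rhs_eq : (∫ z in (0:ℝ)..1, Iprim g z) = ∫ x, Iprim g x ∂ν := by
    rw [intervalIntegral.integral_of_le zero_le_one]
  rw [lhs_eq, rhs_eq, ← setIntegral_congr_fun measurableSet_Ioc claim2, ← hswap,
    setIntegral_congr_fun measurableSet_Ioc claim1]

set_option maxHeartbeats 800000 in
theorem stmt9 :
    ∃ C : ℝ, 0 < C ∧
      ∀ g : ℝ → ℂ, MemLp g 2 (volume.restrict (Set.Ioo (0:ℝ) 1)) →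
        ‖mu1 g‖ ^ 2 ≤
          C * (∫ x in (0:ℝ)..1, ‖g x‖ ^ 2) ^ ((1:ℝ)/2) *
            ((∫ x in (0:ℝ)..1, ‖Pfun g x‖ ^ 2) + ‖mu0 g‖ ^ 2) ^ ((1:ℝ)/2) := by
  refine ⟨9, by norm_num, ?_⟩
  intro g hg
  have h0m : (0:ℝ) ∈ Set.Icc (0:ℝ) 1 := by norm_num
  have h1m : (1:ℝ) ∈ Set.Icc (0:ℝ) 1 := by norm_num
  have hres : volume.restrict (Set.Ioc (0:ℝ) 1) = volume.restrict (Set.Ioo (0:ℝ) 1) :=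
    Measure.restrict_congr_set Ioo_ae_eq_Ioc.symm
  have hfin : IsFiniteMeasure (volume.restrict (Set.Ioo (0:ℝ) 1)) := by
    constructor
    rw [Measure.restrict_apply_univ]
    exact measure_Ioo_lt_top
  have hgi : IntegrableOn g (Set.Ioo (0:ℝ) 1) volume := hg.integrable (by norm_num)
  have hgIoc : IntegrableOn g (Set.Ioc (0:ℝ) 1) volume := by
    rw [IntegrableOn, hres]; exact hgi
  have h2 : Integrable (fun x => ‖g x‖ ^ 2) (volume.restrict (Set.Ioo (0:ℝ) 1)) :=
    hg.norm.integrable_sq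
  have h2Ioc : IntegrableOn (fun x => ‖g x‖ ^ 2) (Set.Ioc (0:ℝ) 1) volume := by
    rw [IntegrableOn, hres]; exact h2
  have hsub : ∀ u v : ℝ, u ∈ Set.Icc (0:ℝ) 1 → v ∈ Set.Icc (0:ℝ) 1 →
      Set.uIoc u v ⊆ Set.Ioc (0:ℝ) 1 := by
    intro u v hu hv
    rw [Set.uIoc]
    exact Set.Ioc_subset_Ioc (le_min hu.1 hv.1) (max_le hu.2 hv.2)
  have hgii : ∀ u v : ℝ, u ∈ Set.Icc (0:ℝ) 1 → v ∈ Set.Icc (0:ℝ) 1 →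
      IntervalIntegrable g volume u v :=
    fun u v hu hv => intervalIntegrable_iff.2 (hgIoc.mono_set (hsub u v hu hv))
  have hgnii : ∀ u v : ℝ, u ∈ Set.Icc (0:ℝ) 1 → v ∈ Set.Icc (0:ℝ) 1 →
      IntervalIntegrable (fun y => ‖g y‖) volume u v :=
    fun u v hu hv => (hgii u v hu hv).norm
  have hgn2ii : ∀ u v : ℝ, u ∈ Set.Icc (0:ℝ) 1 → v ∈ Set.Icc (0:ℝ) 1 →
      IntervalIntegrable (fun y => ‖g y‖ ^ 2) volume u v :=
    fun u v hu hv => intervalIntegrable_iff.2 (h2Ioc.mono_set (hsub u v hu hv))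
  -- continuity of the primitive
  have hIcont : ContinuousOn (Iprim g) (Set.Icc (0:ℝ) 1) := by
    have h_int : IntegrableOn g (Set.uIcc (0:ℝ) 1) volume := by
      rw [Set.uIcc_of_le zero_le_one]
      exact (integrableOn_Icc_iff_integrableOn_Ioo (by finiteness) (by finiteness)).2 hgi
    have := intervalIntegral.continuousOn_primitive_interval (μ := volume) h_int
    rw [Set.uIcc_of_le zero_le_one] at this
    exact this
  have hPcont : ContinuousOn (Pfun g) (Set.Icc (0:ℝ) 1) := hIcont.sub continuousOn_const
  have hPii : ∀ u v : ℝ, u ∈ Set.Icc (0:ℝ) 1 → v ∈ Set.Icc (0:ℝ) 1 →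
      IntervalIntegrable (fun x => ‖Pfun g x‖) volume u v := by
    intro u v hu hv
    exact ((hPcont.mono (Set.uIcc_subset_Icc hu hv)).norm).intervalIntegrable
  have hPn2ii : ∀ u v : ℝ, u ∈ Set.Icc (0:ℝ) 1 → v ∈ Set.Icc (0:ℝ) 1 →
      IntervalIntegrable (fun x => ‖Pfun g x‖ ^ 2) volume u v := by
    intro u v hu hv
    exact (((hPcont.mono (Set.uIcc_subset_Icc hu hv)).norm).pow 2).intervalIntegrable
  set a := ∫ x in (0:ℝ)..1, ‖g x‖ ^ 2 with hadef
  set p := ∫ x in (0:ℝ)..1, ‖Pfun g x‖ ^ 2 with hpdef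
  set m := ‖mu0 g‖ with hmdef
  have ha : 0 ≤ a := intervalIntegral.integral_nonneg zero_le_one (fun y _ => sq_nonneg _)
  have hp : 0 ≤ p := intervalIntegral.integral_nonneg zero_le_one (fun y _ => sq_nonneg _)
  have key_g : ∀ s ∈ Set.Icc (0:ℝ) 1, (∫ y in s..1, ‖g y‖) ≤ Real.sqrt (a * (1 - s)) :=
    fun s hs => cs_general (fun y => ‖g y‖) hgnii hgn2ii hs
  have key_P : ∀ s ∈ Set.Icc (0:ℝ) 1,
      (∫ y in s..1, ‖Pfun g y‖) ≤ Real.sqrt (p * (1 - s)) :=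
    fun s hs => cs_general (fun y => ‖Pfun g y‖) hPii hPn2ii hs
  set c := ∫ z in (0:ℝ)..1, Iprim g z with hcdef
  have hmu1c : mu1 g = c := mu1_eq_integral_Iprim g hgi
  -- ‖c‖ ≤ √a
  have hg01 : (∫ y in (0:ℝ)..1, ‖g y‖) ≤ Real.sqrt a := by
    have := key_g 0 h0m
    simpa using this
  have hIbound : ∀ z ∈ Set.Icc (0:ℝ) 1, ‖Iprim g z‖ ≤ Real.sqrt a := by
    intro z hz
    have h1 : ‖Iprim g z‖ ≤ ∫ y in (0:ℝ)..z, ‖g y‖ :=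
      intervalIntegral.norm_integral_le_integral_norm hz.1
    have hadd : (∫ y in (0:ℝ)..z, ‖g y‖) + (∫ y in z..1, ‖g y‖) = ∫ y in (0:ℝ)..1, ‖g y‖ :=
      intervalIntegral.integral_add_adjacent_intervals (hgnii 0 z h0m hz) (hgnii z 1 hz h1m)
    have hnn : 0 ≤ ∫ y in z..1, ‖g y‖ :=
      intervalIntegral.integral_nonneg hz.2 (fun y _ => norm_nonneg _)
    linarith
  have hcA : ‖c‖ ≤ Real.sqrt a := by
    have h1 : ‖c‖ ≤ ∫ z in (0:ℝ)..1, ‖Iprim g z‖ :=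
      intervalIntegral.norm_integral_le_integral_norm zero_le_one
    have hIii : IntervalIntegrable (fun z => ‖Iprim g z‖) volume 0 1 := by
      refine ((hIcont.mono ?_).norm).intervalIntegrable
      rw [Set.uIcc_of_le zero_le_one]
    have h2' : (∫ z in (0:ℝ)..1, ‖Iprim g z‖) ≤ ∫ _z in (0:ℝ)..1, Real.sqrt a :=
      intervalIntegral.integral_mono_on zero_le_one hIii intervalIntegrable_const hIbound
    rw [intervalIntegral.integral_const, smul_eq_mul] at h2'
    linarith
  -- core estimate
  have core : ∀ δ : ℝ, 0 < δ → δ ≤ 1 →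
      ‖c‖ ≤ m + Real.sqrt (a * δ) + Real.sqrt (p * δ) / δ := by
    intro δ hδ0 hδ1
    have h1δ : (1 - δ : ℝ) ∈ Set.Icc (0:ℝ) 1 := ⟨by linarith, by linarith⟩
    have pointwise : ∀ x ∈ Set.Icc (1 - δ) 1, ‖c‖ - m - Real.sqrt (a * δ) ≤ ‖Pfun g x‖ := by
      intro x hx
      have hxm : x ∈ Set.Icc (0:ℝ) 1 := ⟨by linarith [hx.1], hx.2⟩
      have hadd : Iprim g x + ∫ y in x..1, g y = mu0 g := by
        simp only [Iprim, mu0]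
        exact intervalIntegral.integral_add_adjacent_intervals (hgii 0 x h0m hxm)
          (hgii x 1 hxm h1m)
      have hidentity : c = mu0 g - (∫ y in x..1, g y) - Pfun g x := by
        simp only [Pfun, ← hcdef]
        rw [← hadd]
        ring
      have htri : ‖c‖ ≤ m + ‖∫ y in x..1, g y‖ + ‖Pfun g x‖ := by
        rw [hidentity]
        calc ‖mu0 g - (∫ y in x..1, g y) - Pfun g x‖
            ≤ ‖mu0 g - (∫ y in x..1, g y)‖ + ‖Pfun g x‖ := norm_sub_le _ _
          _ ≤ ‖mu0 g‖ + ‖∫ y in x..1, g y‖ + ‖Pfun g x‖ := by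
              have := norm_sub_le (mu0 g) (∫ y in x..1, g y)
              linarith
      have hseg : ‖∫ y in x..1, g y‖ ≤ Real.sqrt (a * δ) := by
        have h1 : ‖∫ y in x..1, g y‖ ≤ ∫ y in x..1, ‖g y‖ :=
          intervalIntegral.norm_integral_le_integral_norm hxm.2
        have h2' := key_g x hxm
        have h3 : Real.sqrt (a * (1 - x)) ≤ Real.sqrt (a * δ) := by
          apply Real.sqrt_le_sqrt
          apply mul_le_mul_of_nonneg_left _ ha
          linarith [hx.1]
        linarith
      linarith
    have hint : (∫ _x in (1 - δ)..1, (‖c‖ - m - Real.sqrt (a * δ)))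
        ≤ ∫ x in (1 - δ)..1, ‖Pfun g x‖ :=
      intervalIntegral.integral_mono_on (by linarith) intervalIntegrable_const
        (hPii (1 - δ) 1 h1δ h1m) pointwise
    rw [intervalIntegral.integral_const, smul_eq_mul] at hint
    have hPbound : (∫ x in (1 - δ)..1, ‖Pfun g x‖) ≤ Real.sqrt (p * δ) := by
      have := key_P (1 - δ) h1δ
      rw [sub_sub_cancel] at this
      exact this
    have hfinal : (1 - (1 - δ)) * (‖c‖ - m - Real.sqrt (a * δ)) ≤ Real.sqrt (p * δ) :=
      le_trans hint hPbound
    rw [sub_sub_cancel] at hfinal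
    have h2'' : ‖c‖ - m - Real.sqrt (a * δ) ≤ Real.sqrt (p * δ) / δ := by
      rw [le_div_iff₀ hδ0]
      linarith [hfinal]
    linarith
  -- final algebra
  set A := Real.sqrt a with hAdef
  set N := Real.sqrt (p + m ^ 2) with hNdef
  have hA0 : 0 ≤ A := Real.sqrt_nonneg _
  have hN0 : 0 ≤ N := Real.sqrt_nonneg _
  have hc0 : 0 ≤ ‖c‖ := norm_nonneg _
  have hm2 : 0 ≤ m := norm_nonneg _
  have hgoal : ‖c‖ ^ 2 ≤ 9 * A * N := by
    have hmN : m ≤ N := by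
      rw [hNdef]
      calc m = Real.sqrt (m ^ 2) := (Real.sqrt_sq hm2).symm
        _ ≤ Real.sqrt (p + m ^ 2) := Real.sqrt_le_sqrt (by linarith)
    have hpN : p ≤ N ^ 2 := by
      rw [hNdef, Real.sq_sqrt (by positivity)]
      linarith [sq_nonneg m]
    have haA : a = A * A := (Real.mul_self_sqrt ha).symm
    rcases le_or_gt A N with hAN | hNA
    · -- A ≤ N: use ‖c‖ ≤ A
      nlinarith [hcA]
    · rcases eq_or_lt_of_le hN0 with hN0' | hNpos
      · -- N = 0
        have hpm : p + m ^ 2 = 0 := by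
          have := Real.sqrt_eq_zero (by positivity) |>.1 hN0'.symm
          exact this
        have hpz : p = 0 := by nlinarith [sq_nonneg m]
        have hmz : m = 0 := by nlinarith [sq_nonneg m]
        have hcz : ‖c‖ ≤ 0 := by
          by_contra hpos
          push_neg at hpos
          rcases eq_or_lt_of_le ha with ha0 | ha0
          · have := core 1 one_pos le_rfl
            rw [hmz, hpz, ← ha0] at this
            simp only [zero_mul, Real.sqrt_zero, zero_add, add_zero, div_one] at this
            linarith
          · set δ := min 1 (‖c‖ ^ 2 / (4 * a)) with hδdef
            have hδ0 : 0 < δ := lt_min one_pos (by positivity)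
            have hδ1 : δ ≤ 1 := min_le_left _ _
            have := core δ hδ0 hδ1
            rw [hmz, hpz] at this
            simp only [zero_mul, Real.sqrt_zero, zero_div, zero_add, add_zero] at this
            have hub : Real.sqrt (a * δ) ≤ ‖c‖ / 2 := by
              have h1 : a * δ ≤ a * (‖c‖ ^ 2 / (4 * a)) :=
                mul_le_mul_of_nonneg_left (min_le_right _ _) ha
              have h2' : a * (‖c‖ ^ 2 / (4 * a)) = (‖c‖ / 2) ^ 2 := by
                field_simp
                ring
              calc Real.sqrt (a * δ) ≤ Real.sqrt ((‖c‖ / 2) ^ 2) :=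
                    Real.sqrt_le_sqrt (by linarith)
                _ = ‖c‖ / 2 := Real.sqrt_sq (by positivity)
            linarith
        have hceq : ‖c‖ = 0 := le_antisymm hcz hc0
        rw [hceq]
        nlinarith [mul_nonneg hA0 hN0]
      · -- 0 < N < A
        have hApos : 0 < A := lt_trans hNpos hNA
        set δ := N / A with hδdef
        have hδ0 : 0 < δ := div_pos hNpos hApos
        have hδ1 : δ ≤ 1 := (div_le_one hApos).2 hNA.le
        have hcore := core δ hδ0 hδ1
        set r := Real.sqrt (A * N) with hrdef
        have hr0 : 0 ≤ r := Real.sqrt_nonneg _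
        have hr2 : r ^ 2 = A * N := Real.sq_sqrt (by positivity)
        have e1 : Real.sqrt (a * δ) = r := by
          rw [hrdef]
          congr 1
          rw [haA, hδdef]
          field_simp
        have e2 : Real.sqrt (p * δ) / δ ≤ r := by
          have h1 : p * δ ≤ N ^ 2 * δ := mul_le_mul_of_nonneg_right hpN hδ0.le
          have h2' : Real.sqrt (N ^ 2 * δ) = N * Real.sqrt δ := by
            rw [Real.sqrt_mul (sq_nonneg N), Real.sqrt_sq hNpos.le]
          have h3 : Real.sqrt (p * δ) ≤ N * Real.sqrt δ := by
            rw [← h2']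
            exact Real.sqrt_le_sqrt h1
          have h4 : Real.sqrt (p * δ) / δ ≤ N * Real.sqrt δ / δ := by gcongr
          have h5 : N * Real.sqrt δ / δ = A * Real.sqrt δ := by
            rw [hδdef]
            field_simp
          have hsq : (A * Real.sqrt δ) ^ 2 = A * N := by
            rw [mul_pow, Real.sq_sqrt hδ0.le, hδdef]
            field_simp
          have h6 : r = A * Real.sqrt δ := by
            rw [hrdef, ← hsq, Real.sqrt_sq (by positivity)]
          rw [h6]
          calc Real.sqrt (p * δ) / δ ≤ N * Real.sqrt δ / δ := h4
            _ = A * Real.sqrt δ := h5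
        have e3 : N ≤ r := by
          rw [hrdef]
          calc N = Real.sqrt (N ^ 2) := (Real.sqrt_sq hNpos.le).symm
            _ ≤ Real.sqrt (A * N) := Real.sqrt_le_sqrt (by nlinarith)
        have hc3 : ‖c‖ ≤ 3 * r := by
          rw [e1] at hcore
          linarith [hmN, e2, e3]
        have h9 : ‖c‖ ^ 2 ≤ (3 * r) ^ 2 := by
          nlinarith [hc3, hc0]
        have h10 : (3 * r) ^ 2 = 9 * (A * N) := by rw [mul_pow, hr2]; norm_num
        rw [h10] at h9
        linarith
  rw [hmu1c, ← Real.sqrt_eq_rpow, ← Real.sqrt_eq_rpow]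
  exact hgoal
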